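/- Let I be a set, (A_i)_{i∈I} a family of groups, C a group, h : A = ∏_{i∈I} A_i → C a group homomorphism, and κ an uncountable cardinal. Then the following are equivalent: (1) for every partition of I into fewer than κ subsets J_s (s ∈ S), there exist finitely many indices s_0, …, s_{n-1} ∈ S such that the subgroup ∏_{i ∈ I − (J_{s_0} ∪ … ∪ J_{s_{n-1}})} A_i lies in ker(h); (2) h factors as A → A/U_0 × … × A/U_{n-1} → C for some finite family of κ-complete ultrafilters U_0, …, U_{n-1} on I. Moreover, when these hold and card(I) is less than every κ-complete measurable cardinal (in particular, if no such cardinals exist), h factors through the projection of A onto the product of finitely many of the A_i. -/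

import Mathlib

universe u

open Function

/-- The setoid on a dependent product given by a filter. -/
def redSetoid {I : Type u} (F : Filter I) (A : I → Type u) : Setoid (∀ i, A i) where
  r a b := {i | a i = b i} ∈ F
  iseqv := by
    refine ⟨fun a => ?_, fun {a b} h => ?_, fun {a b c} h₁ h₂ => ?_⟩
    · simp
    · simpa [eq_comm] using h
    · exact Filter.mem_of_superset (Filter.inter_mem h₁ h₂)
        (fun i hi => hi.1.trans hi.2)

/-- The reduced product of a family of sets with respect to a filter. -/
def ReducedProduct {I : Type u} (F : Filter I) (A : I → Type u) : Type u :=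
  Quotient (redSetoid F A)

/-- The canonical quotient map onto a reduced product. -/
def reducedMk {I : Type u} (F : Filter I) (A : I → Type u) (a : ∀ i, A i) :
    ReducedProduct F A :=
  Quotient.mk (redSetoid F A) a

/-- A filter is `κ`-complete if it is closed under intersections of
families of fewer than `κ` of its members. -/
def KappaComplete {I : Type u} (κ : Cardinal.{u}) (F : Filter I) : Prop :=
  ∀ 𝒮 : Set (Set I), Cardinal.mk 𝒮 < κ → (∀ s ∈ 𝒮, s ∈ F) → ⋂₀ 𝒮 ∈ F

/-- A cardinal `μ` is a `κ`-complete measurable cardinal if there is a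
nonprincipal `κ`-complete ultrafilter on a set of cardinality `μ`. -/
def IsKappaCompleteMeasurable (κ μ : Cardinal.{u}) : Prop :=
  ∃ U : Ultrafilter μ.out, (∀ x, (U : Filter μ.out) ≠ pure x) ∧
    KappaComplete κ (U : Filter μ.out)


namespace KCUF

variable {I : Type u} {κ : Cardinal.{u}} {𝒦 : Set (Set I)}

/-- positivity with respect to a collection of sets -/
def Pos (𝒦 : Set (Set I)) (X : Set I) : Prop := Xᶜ ∉ 𝒦

structure Good (κ : Cardinal.{u}) (𝒦 : Set (Set I)) : Prop where
  up : ∀ {X Y : Set I}, X ∈ 𝒦 → X ⊆ Y → Y ∈ 𝒦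
  inter : ∀ {X Y : Set I}, X ∈ 𝒦 → Y ∈ 𝒦 → X ∩ Y ∈ 𝒦
  part : ∀ (S : Type u) (J : S → Set I), Cardinal.mk S < κ →
    Pairwise (Disjoint on J) → (⋃ s, J s) = Set.univ →
    ∃ t : Finset S, (⋃ s ∈ t, J s) ∈ 𝒦
  univ_mem : Set.univ ∈ 𝒦
  alef : Cardinal.aleph0 < κ

theorem Good.noInf (hG : Good κ 𝒦) (Z : ℕ → Set I) (hpos : ∀ k, Pos 𝒦 (Z k))
    (hdisj : Pairwise (Disjoint on Z)) : False := by
  classical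
  set J : Option (ULift.{u} ℕ) → Set I :=
    fun o => o.elim (⋃ k, Z k)ᶜ (fun k => Z k.down) with hJ
  have hcard : Cardinal.mk (Option (ULift.{u} ℕ)) < κ := by
    rw [Cardinal.mk_option]
    refine Cardinal.add_lt_of_lt hG.alef.le ?_ ?_
    · simpa using hG.alef
    · exact lt_trans Cardinal.one_lt_aleph0 hG.alef
  have hdisjJ : Pairwise (Disjoint on J) := by
    rintro (_|k) (_|j) hne
    · exact absurd rfl hne
    · refine Set.disjoint_left.mpr fun i hi hij => ?_
      exact hi (Set.mem_iUnion.mpr ⟨j.down, hij⟩)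
    · refine Set.disjoint_right.mpr fun i hi hij => ?_
      exact hi (Set.mem_iUnion.mpr ⟨k.down, hij⟩)
    · have : k.down ≠ j.down := by
        intro hkj; apply hne; congr 1; exact ULift.ext _ _ hkj
      exact hdisj this
  have hunion : (⋃ o, J o) = Set.univ := by
    apply Set.eq_univ_of_forall
    intro i
    by_cases hi : i ∈ ⋃ k, Z k
    · obtain ⟨k, hk⟩ := Set.mem_iUnion.mp hi
      exact Set.mem_iUnion.mpr ⟨some ⟨k⟩, hk⟩
    · exact Set.mem_iUnion.mpr ⟨none, hi⟩
  obtain ⟨t, ht⟩ := hG.part _ J hcard hdisjJ hunion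
  set N : ℕ := t.sup (fun o => o.elim 0 (fun k => k.down + 1)) with hN
  have hsub : (⋃ o ∈ t, J o) ⊆ (Z N)ᶜ := by
    intro i hi
    obtain ⟨o, hot, hio⟩ := Set.mem_iUnion₂.mp hi
    match o with
    | none =>
      exact fun hiN => hio (Set.mem_iUnion.mpr ⟨N, hiN⟩)
    | some k =>
      have hk : k.down + 1 ≤ N := Finset.le_sup (f := fun o : Option (ULift.{u} ℕ) =>
        o.elim 0 (fun k => k.down + 1)) hot
      have : k.down ≠ N := by omega
      exact Set.disjoint_left.mp (hdisj this) hio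
  exact hpos N (hG.up ht hsub)

theorem Good.noChain (hG : Good κ 𝒦) (Q : Set I → Prop) (V₀ : Set I) (hQ0 : Q V₀)
    (step : ∀ V, Q V → ∃ Z, Z ⊆ V ∧ Pos 𝒦 Z ∧ Q (V \ Z)) : False := by
  classical
  let F : {V : Set I // Q V} → {V : Set I // Q V} := fun V =>
    ⟨V.1 \ (step V.1 V.2).choose, (step V.1 V.2).choose_spec.2.2⟩
  let W : ℕ → {V : Set I // Q V} := fun k => F^[k] ⟨V₀, hQ0⟩
  let Z : ℕ → Set I := fun k => (step (W k).1 (W k).2).choose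
  have hWsucc : ∀ k, (W (k+1)).1 = (W k).1 \ Z k := by
    intro k
    show (F^[k+1] _).1 = _
    rw [Function.iterate_succ_apply']
  have hZsub : ∀ k, Z k ⊆ (W k).1 := fun k => (step (W k).1 (W k).2).choose_spec.1
  have hZpos : ∀ k, Pos 𝒦 (Z k) := fun k => (step (W k).1 (W k).2).choose_spec.2.1
  have hanti : ∀ k j, k ≤ j → (W j).1 ⊆ (W k).1 := by
    intro k j hkj
    induction j with
    | zero => simp_all
    | succ j ih =>
      rcases Nat.lt_or_ge k (j+1) with hlt | hge
      · have := ih (Nat.lt_succ_iff.mp hlt)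
        rw [hWsucc j]
        exact (Set.diff_subset).trans this
      · have : k = j + 1 := le_antisymm hkj hge
        subst this; exact subset_rfl
  have key : ∀ k j, k < j → Disjoint (Z k) (Z j) := by
    intro k j hkj
    have h1 : Z j ⊆ (W (k+1)).1 := (hZsub j).trans (hanti (k+1) j hkj)
    rw [hWsucc k] at h1
    exact Set.disjoint_left.mpr fun i hik hij => (h1 hij).2 hik
  exact hG.noInf Z hZpos (fun k j hne => hne.lt_or_gt.elim (key k j)
    (fun hlt => (key j k hlt).symm))

/-- an atom for `𝒦` -/
def Atom (𝒦 : Set (Set I)) (Z : Set I) : Prop :=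
  Pos 𝒦 Z ∧ ∀ X, Pos 𝒦 (Z ∩ X) → ¬ Pos 𝒦 (Z \ X)

theorem Good.exists_atom (hG : Good κ 𝒦) (Y : Set I) (hY : Pos 𝒦 Y) :
    ∃ Z, Z ⊆ Y ∧ Atom 𝒦 Z := by
  by_contra hno
  push_neg at hno
  apply hG.noChain (fun V => V ⊆ Y ∧ Pos 𝒦 V) Y ⟨subset_rfl, hY⟩
  rintro V ⟨hVY, hVpos⟩
  have hnA : ¬ Atom 𝒦 V := fun hA => hno V hVY hA
  rw [Atom] at hnA
  push_neg at hnA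
  obtain ⟨X, hX1, hX2⟩ := hnA hVpos
  exact ⟨V ∩ X, Set.inter_subset_left, hX1,
    ⟨(Set.diff_subset).trans hVY, by rwa [Set.diff_self_inter]⟩⟩

theorem Good.exists_atom_cover (hG : Good κ 𝒦) :
    ∃ T : Finset (Set I), (∀ Z ∈ T, Atom 𝒦 Z) ∧
      (T : Set (Set I)).Pairwise Disjoint ∧ ⋃₀ (T : Set (Set I)) ∈ 𝒦 := by
  classical
  by_contra hno
  push_neg at hno
  apply hG.noChain (fun V => ∃ T : Finset (Set I), (∀ Z ∈ T, Atom 𝒦 Z) ∧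
    (T : Set (Set I)).Pairwise Disjoint ∧ V = (⋃₀ (T : Set (Set I)))ᶜ) Set.univ
    ⟨∅, by simp, by simp, by simp⟩
  rintro V ⟨T, hT1, hT2, rfl⟩
  have hpos : Pos 𝒦 ((⋃₀ (T : Set (Set I)))ᶜ) := by
    rw [Pos, compl_compl]; exact hno T hT1 hT2
  obtain ⟨Z, hZsub, hZatom⟩ := hG.exists_atom _ hpos
  refine ⟨Z, hZsub, hZatom.1, insert Z T, ?_, ?_, ?_⟩
  · intro W hW
    rcases Finset.mem_insert.mp hW with rfl | hWT
    · exact hZatom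
    · exact hT1 W hWT
  · rw [Finset.coe_insert]
    refine Set.pairwise_insert_of_symmetric |>.mpr ⟨hT2, ?_⟩
    intro b hbT _
    refine Set.disjoint_left.mpr fun i hiZ hib => ?_
    exact (hZsub hiZ) (Set.mem_sUnion.mpr ⟨b, hbT, hib⟩)
  · rw [Finset.coe_insert, Set.sUnion_insert, Set.compl_union]
    ext i
    simp only [Set.mem_diff, Set.mem_inter_iff, Set.mem_compl_iff]
    tauto


section Ultra
variable (hG : Good κ 𝒦)

def atomFilter (hG : Good κ 𝒦) {Z : Set I} (hZ : Atom 𝒦 Z) : Filter I where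
  sets := {X | Pos 𝒦 (Z ∩ X)}
  univ_sets := by
    show Pos 𝒦 (Z ∩ Set.univ)
    rw [Set.inter_univ]; exact hZ.1
  sets_of_superset := by
    intro x y hx hxy hc
    exact hx (hG.up hc (Set.compl_subset_compl.mpr (Set.inter_subset_inter_right _ hxy)))
  inter_sets := by
    intro x y hx hy hc
    have hny : (Z \ y)ᶜ ∈ 𝒦 := not_not.mp (hZ.2 y hy)
    refine hx (hG.up (hG.inter hc hny) ?_)
    intro i hi hii
    rcases hi with ⟨h1, h2⟩
    simp only [Set.mem_compl_iff, Set.mem_inter_iff, Set.mem_diff, not_and, not_not] at h1 h2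
    exact h1 hii.1 hii.2 (h2 hii.1)

theorem mem_atomFilter {Z : Set I} (hZ : Atom 𝒦 Z) (X : Set I) :
    X ∈ atomFilter hG hZ ↔ Pos 𝒦 (Z ∩ X) := Iff.rfl

noncomputable def atomUF (hG : Good κ 𝒦) {Z : Set I} (hZ : Atom 𝒦 Z) : Ultrafilter I :=
  Ultrafilter.ofComplNotMemIff (atomFilter hG hZ) (by
    intro s
    rw [mem_atomFilter, mem_atomFilter]
    constructor
    · intro hns hc
      have h1 : (Z ∩ sᶜ)ᶜ ∈ 𝒦 := not_not.mp hns
      refine hZ.1 (hG.up (hG.inter hc h1) ?_)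
      intro i hi hiZ
      rcases hi with ⟨ha, hb⟩
      simp only [Set.mem_compl_iff, Set.mem_inter_iff, not_and, not_not] at ha hb
      exact ha hiZ (hb hiZ)
    · intro hs
      have := hZ.2 s hs
      rwa [Set.diff_eq] at this)

theorem mem_atomUF {Z : Set I} (hZ : Atom 𝒦 Z) (X : Set I) :
    X ∈ (atomUF hG hZ : Filter I) ↔ Pos 𝒦 (Z ∩ X) := Iff.rfl

theorem K_subset_atomUF {Z : Set I} (hZ : Atom 𝒦 Z) {X : Set I}
    (hX : X ∈ 𝒦) : X ∈ (atomUF hG hZ : Filter I) := by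
  rw [mem_atomUF]
  intro hc
  refine hZ.1 (hG.up (hG.inter hc hX) ?_)
  intro i hi
  rcases hi with ⟨h1, h2⟩
  simp only [Set.mem_compl_iff, Set.mem_inter_iff, not_and] at h1 ⊢
  exact fun hiZ => h1 hiZ h2

theorem atomUF_complete {Z : Set I} (hZ : Atom 𝒦 Z) :
    ∀ 𝒮 : Set (Set I), Cardinal.mk 𝒮 < κ →
      (∀ s ∈ 𝒮, s ∈ (atomUF hG hZ : Filter I)) → ⋂₀ 𝒮 ∈ (atomUF hG hZ : Filter I) := by
  intro 𝒮 hcard hmem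
  by_contra hns
  classical
  let r : ↥𝒮 → ↥𝒮 → Prop := WellOrderingRel
  have hwo : IsWellOrder ↥𝒮 r := WellOrderingRel.isWellOrder
  let P : Option ↥𝒮 → Set I := fun o => o.elim (⋂₀ 𝒮)
    (fun s => {i | i ∉ (s : Set I) ∧ ∀ s' : ↥𝒮, r s' s → i ∈ (s' : Set I)})
  have hcardP : Cardinal.mk (Option ↥𝒮) < κ := by
    rw [Cardinal.mk_option]
    exact Cardinal.add_lt_of_lt hG.alef.le hcard (lt_trans Cardinal.one_lt_aleph0 hG.alef)
  have hdisj : Pairwise (Disjoint on P) := by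
    rintro (_|s) (_|s') hne
    · exact absurd rfl hne
    · exact Set.disjoint_left.mpr fun i hi hi' => hi'.1 (Set.mem_sInter.mp hi _ s'.2)
    · exact Set.disjoint_left.mpr fun i hi hi' => hi.1 (Set.mem_sInter.mp hi' _ s.2)
    · have hss : s ≠ s' := fun he => hne (by rw [he])
      rcases trichotomous_of r s s' with hr | he | hr
      · exact Set.disjoint_left.mpr fun i hi hi' => hi.1 (hi'.2 s hr)
      · exact absurd he hss
      · exact Set.disjoint_left.mpr fun i hi hi' => hi'.1 (hi.2 s' hr)
  have hunion : (⋃ o, P o) = Set.univ := by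
    apply Set.eq_univ_of_forall
    intro i
    by_cases hall : ∀ X ∈ 𝒮, i ∈ X
    · exact Set.mem_iUnion.mpr ⟨none, Set.mem_sInter.mpr hall⟩
    · push_neg at hall
      obtain ⟨X, hX, hiX⟩ := hall
      have hne : {s : ↥𝒮 | i ∉ (s : Set I)}.Nonempty := ⟨⟨X, hX⟩, hiX⟩
      have wf : WellFounded r := hwo.toIsWellFounded.wf
      refine Set.mem_iUnion.mpr ⟨some (wf.min _ hne), ?_, ?_⟩
      · exact wf.min_mem _ hne
      · intro s' hs'
        by_contra hb
        exact wf.not_lt_min _ hb hs'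
  obtain ⟨t, ht⟩ := hG.part _ P hcardP hdisj hunion
  have htU : (⋃ o ∈ t, P o) ∈ (atomUF hG hZ : Filter I) := K_subset_atomUF hG hZ ht
  have hex : ∃ o ∈ (t : Set (Option ↥𝒮)), P o ∈ atomUF hG hZ := by
    rw [← Ultrafilter.finite_biUnion_mem_iff t.finite_toSet]
    simpa using htU
  obtain ⟨o, hot, hPU⟩ := hex
  match o with
  | none => exact hns hPU
  | some s =>
    have h1 : (s : Set I) ∈ atomUF hG hZ := hmem _ s.2
    have h2 : (s : Set I)ᶜ ∈ atomUF hG hZ :=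
      Filter.mem_of_superset hPU (fun i hi => hi.1)
    exact (Ultrafilter.compl_notMem_iff.mpr h1) h2


theorem Good.biInter_mem (hG : Good κ 𝒦) {ι : Type*} (t : Finset ι) (f : ι → Set I)
    (hf : ∀ i ∈ t, f i ∈ 𝒦) : (⋂ i ∈ t, f i) ∈ 𝒦 := by
  classical
  induction t using Finset.induction_on with
  | empty => simpa using hG.univ_mem
  | insert _ _ hni ih =>
    rw [Finset.set_biInter_insert]
    exact hG.inter (hf _ (Finset.mem_insert_self _ _))
      (ih fun i hi => hf i (Finset.mem_insert_of_mem hi))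

theorem mem_K_of_forall (hG : Good κ 𝒦) (T : Finset (Set I))
    (hT : ∀ Z ∈ T, Atom 𝒦 Z) (hcov : ⋃₀ (T : Set (Set I)) ∈ 𝒦) {X : Set I}
    (hX : ∀ Z (hZT : Z ∈ T), X ∈ (atomUF hG (hT Z hZT) : Filter I)) : X ∈ 𝒦 := by
  have key : ∀ Z ∈ T, Zᶜ ∪ X ∈ 𝒦 := by
    intro Z hZT
    have h1 : Xᶜ ∉ (atomUF hG (hT Z hZT)) :=
      Ultrafilter.compl_notMem_iff.mpr (hX Z hZT)
    have h1' : ¬ Pos 𝒦 (Z ∩ Xᶜ) := fun hp =>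
      h1 (Ultrafilter.mem_coe.mp ((mem_atomUF hG (hT Z hZT) Xᶜ).mpr hp))
    have h2 : (Z ∩ Xᶜ)ᶜ ∈ 𝒦 := not_not.mp h1'
    rwa [Set.compl_inter, compl_compl] at h2
  have hinter : (⋂ Z ∈ T, Zᶜ ∪ X) ∈ 𝒦 := hG.biInter_mem T _ key
  refine hG.up (hG.inter hinter hcov) ?_
  rintro i ⟨h1, Z, hZT, hiZ⟩
  have := Set.mem_iInter₂.mp h1 Z hZT
  rcases this with hc | hx
  · exact absurd hiZ hc
  · exact hx

theorem Good.exists_ultrafilters (hG : Good κ 𝒦) :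
    ∃ (n : ℕ) (U : Fin n → Ultrafilter I),
      (∀ m, ∀ 𝒮 : Set (Set I), Cardinal.mk 𝒮 < κ →
        (∀ s ∈ 𝒮, s ∈ (U m : Filter I)) → ⋂₀ 𝒮 ∈ (U m : Filter I)) ∧
      ∀ X : Set I, (∀ m, X ∈ (U m : Filter I)) → X ∈ 𝒦 := by
  obtain ⟨T, hT1, hT2, hT3⟩ := hG.exists_atom_cover
  let e : Fin T.card ≃ {x // x ∈ T} := T.equivFin.symm
  refine ⟨T.card, fun m => atomUF hG (hT1 _ (e m).2),
    fun m => atomUF_complete hG _, ?_⟩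
  intro X hX
  apply mem_K_of_forall hG T hT1 hT3
  intro Z hZT
  have := hX (e.symm ⟨Z, hZT⟩)
  simpa only [Equiv.apply_symm_apply] using this

end Ultra
end KCUF

/-- For a group homomorphism `h` on a product of groups
`A = ∏ᵢ Aᵢ` and an uncountable cardinal `κ`, the following are equivalent:
(1) for every partition of `I` into fewer than `κ` subsets `J s`, there are
finitely many indices `s ∈ t` such that the subgroup of elements supported in
`I − ⋃_{s ∈ t} J s` lies in `ker h`;
(2) `h` factors through the natural map `A → A/U 0 × … × A/U (n-1)` for some
finitely many `κ`-complete ultrafilters on `I`.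
Moreover, when these hold, if `card I` is less than every `κ`-complete
measurable cardinal, then `h` factors through the projection of `A` onto the
product of finitely many of the `A i`. -/


theorem hom_on_product_factors_through_kappa_complete_ultraproducts_iff
    {I : Type u} (A : I → Type u) [∀ i, Group (A i)] {C : Type u} [Group C]
    (h : (∀ i, A i) →* C) (κ : Cardinal.{u}) (hκ : Cardinal.aleph0 < κ) :
    ((∀ (S : Type u) (J : S → Set I), Cardinal.mk S < κ →
        Pairwise (Disjoint on J) → (⋃ s, J s) = Set.univ →
        ∃ t : Finset S, ∀ a : ∀ i, A i,
          (∀ i, i ∈ (⋃ s ∈ t, J s) → a i = 1) → h a = 1)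
      ↔ (∃ (n : ℕ) (U : Fin n → Ultrafilter I),
          (∀ m, KappaComplete κ (U m : Filter I)) ∧
          ∃ g : (∀ m, ReducedProduct (U m : Filter I) A) → C,
            ⇑h = g ∘ fun (a : ∀ i, A i) (m : Fin n) =>
              reducedMk (U m : Filter I) A a))
  ∧ ((∀ (S : Type u) (J : S → Set I), Cardinal.mk S < κ →
        Pairwise (Disjoint on J) → (⋃ s, J s) = Set.univ →
        ∃ t : Finset S, ∀ a : ∀ i, A i,
          (∀ i, i ∈ (⋃ s ∈ t, J s) → a i = 1) → h a = 1) →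
      (∀ μ : Cardinal.{u}, IsKappaCompleteMeasurable κ μ → Cardinal.mk I < μ) →
      ∃ (n : ℕ) (s : Fin n → I) (g : (∀ m, A (s m)) → C),
        ⇑h = g ∘ fun (a : ∀ i, A i) (m : Fin n) => a (s m)) := by
  classical
  set 𝒦 : Set (Set I) := {X | ∀ a : ∀ i, A i, (∀ i ∈ X, a i = 1) → h a = 1} with h𝒦
  have hup : ∀ {X Y : Set I}, X ∈ 𝒦 → X ⊆ Y → Y ∈ 𝒦 := by
    intro X Y hX hXY a ha
    exact hX a fun i hi => ha i (hXY hi)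
  have huniv : Set.univ ∈ 𝒦 := by
    intro a ha
    have : a = 1 := funext fun i => ha i (Set.mem_univ i)
    rw [this, map_one]
  have hinter : ∀ {X Y : Set I}, X ∈ 𝒦 → Y ∈ 𝒦 → X ∩ Y ∈ 𝒦 := by
    intro X Y hX hY a ha
    set b : ∀ i, A i := fun i => if i ∈ X then 1 else a i with hb
    set c : ∀ i, A i := fun i => if i ∈ X \ Y then a i else 1 with hc
    have habc : a = b * c := by
      funext i
      show a i = b i * c i
      by_cases hiX : i ∈ X
      · by_cases hiY : i ∈ Y
        · have h1 : a i = 1 := ha i ⟨hiX, hiY⟩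
          simp [hb, hc, hiX, hiY, h1, Set.mem_diff]
        · simp [hb, hc, hiX, hiY, Set.mem_diff]
      · simp [hb, hc, hiX, Set.mem_diff]
    have hbv : h b = 1 := hX b fun i hi => by simp [hb, hi]
    have hcv : h c = 1 := hY c fun i hi => by
      have hnd : i ∉ X \ Y := fun hd => hd.2 hi
      simp only [hc]
      rw [if_neg hnd]
    rw [habc, map_mul, hbv, hcv, one_mul]
  have hGood : (∀ (S : Type u) (J : S → Set I), Cardinal.mk S < κ →
        Pairwise (Disjoint on J) → (⋃ s, J s) = Set.univ →
        ∃ t : Finset S, ∀ a : ∀ i, A i,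
          (∀ i, i ∈ (⋃ s ∈ t, J s) → a i = 1) → h a = 1) → KCUF.Good κ 𝒦 := by
    intro h1
    exact ⟨hup, hinter, fun S J hS hd hu => by
      obtain ⟨t, ht⟩ := h1 S J hS hd hu
      exact ⟨t, fun a ha => ht a fun i hi => ha i hi⟩, huniv, hκ⟩
  have factor : ∀ (n : ℕ) (U : Fin n → Ultrafilter I),
      (∀ X : Set I, (∀ m, X ∈ (U m : Filter I)) → X ∈ 𝒦) →
      ∃ g : (∀ m, ReducedProduct (U m : Filter I) A) → C,
        ⇑h = g ∘ fun (a : ∀ i, A i) (m : Fin n) => reducedMk (U m : Filter I) A a := by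
    intro n U hint
    refine ⟨fun c => if hc : ∃ a : ∀ i, A i,
      (∀ m, reducedMk (U m : Filter I) A a = c m) then h hc.choose else 1, ?_⟩
    funext a
    have hex : ∃ b : ∀ i, A i, ∀ m, reducedMk (U m : Filter I) A b =
        reducedMk (U m : Filter I) A a := ⟨a, fun m => rfl⟩
    simp only [Function.comp_apply]
    rw [dif_pos hex]
    set b := hex.choose with hbdef
    have hbspec := hex.choose_spec
    have hXm : ∀ m, {i | b i = a i} ∈ (U m : Filter I) := fun m =>
      Quotient.exact (hbspec m)
    have hXK : {i | b i = a i} ∈ 𝒦 := hint _ hXm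
    have hone : h (b * a⁻¹) = 1 := hXK _ (fun i hi => by
      have hba : b i = a i := hi
      simp [hba])
    rw [map_mul, map_inv, mul_inv_eq_one] at hone
    exact hone.symm
  refine ⟨⟨?_, ?_⟩, ?_⟩
  · -- (1) → (2)
    intro h1
    obtain ⟨n, U, hcomp, hint⟩ := (hGood h1).exists_ultrafilters
    exact ⟨n, U, fun m => hcomp m, factor n U hint⟩
  · -- (2) → (1)
    rintro ⟨n, U, hcomp, g, hg⟩ S J hS hd hu
    have hsel : ∀ m, ∃ s, J s ∈ (U m : Filter I) := by
      intro m
      by_contra hc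
      push_neg at hc
      have hcompl : ∀ s, (J s)ᶜ ∈ (U m : Filter I) := fun s =>
        Ultrafilter.mem_coe.mpr (Ultrafilter.compl_mem_iff_notMem.mpr
          (fun hm => hc s (Ultrafilter.mem_coe.mp hm)))
      have hmem : ∀ X ∈ Set.range (fun s => (J s)ᶜ), X ∈ (U m : Filter I) := by
        rintro X ⟨s, rfl⟩; exact hcompl s
      have hcard : Cardinal.mk (Set.range (fun s => (J s)ᶜ)) < κ :=
        lt_of_le_of_lt Cardinal.mk_range_le hS
      have hI := hcomp m _ hcard hmem
      rw [Set.sInter_range] at hI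
      have hempty : (⋂ s, (J s)ᶜ) = (∅ : Set I) := by
        rw [← Set.compl_iUnion, hu, Set.compl_univ]
      rw [hempty] at hI
      exact Filter.empty_notMem _ hI
    choose sf hsf using hsel
    refine ⟨Finset.image sf Finset.univ, ?_⟩
    intro a ha
    have hmk : ∀ m, reducedMk (U m : Filter I) A a = reducedMk (U m : Filter I) A 1 := by
      intro m
      apply Quotient.sound
      show {i | a i = (1 : ∀ i, A i) i} ∈ (U m : Filter I)
      refine Filter.mem_of_superset (hsf m) ?_
      intro i hi
      have hiu : i ∈ ⋃ s ∈ Finset.image sf Finset.univ, J s :=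
        Set.mem_biUnion (Finset.mem_image_of_mem sf (Finset.mem_univ m)) hi
      simpa using ha i hiu
    have h1 : h a = g (fun m => reducedMk (U m : Filter I) A a) := congrFun hg a
    have h2 : h 1 = g (fun m => reducedMk (U m : Filter I) A 1) := congrFun hg 1
    rw [h1, show (fun m => reducedMk (U m : Filter I) A a)
        = fun m => reducedMk (U m : Filter I) A 1 from funext hmk, ← h2, map_one]
  · -- moreover
    intro h1 hMeas
    obtain ⟨n, U, hcomp, hint⟩ := (hGood h1).exists_ultrafilters
    have hprin : ∀ m, ∃ x : I, (U m : Filter I) = pure x := by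
      intro m
      by_contra hc
      push_neg at hc
      refine absurd (hMeas (Cardinal.mk I) ?_) (lt_irrefl _)
      obtain ⟨e⟩ := Cardinal.eq.mp (Cardinal.mk_out (Cardinal.mk I))
      refine ⟨Ultrafilter.map e.symm (U m), ?_, ?_⟩
      · intro x hx
        apply hc (e x)
        have hsing : {e x} ∈ (U m : Filter I) := by
          have hx1 : ({x} : Set (Cardinal.mk I).out) ∈
              (Ultrafilter.map e.symm (U m) : Filter _) := by
            rw [hx]; exact Filter.singleton_mem_pure
          rw [Ultrafilter.coe_map, Filter.mem_map] at hx1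
          have hpre : e.symm ⁻¹' {x} = {e x} := by
            ext i
            simp only [Set.mem_preimage, Set.mem_singleton_iff]
            exact e.symm_apply_eq
          rwa [hpre] at hx1
        apply Filter.ext
        intro s
        rw [Filter.mem_pure]
        constructor
        · intro hs
          by_contra hxs
          have hdisj : ({e x} : Set I) ∩ s = ∅ := by
            ext i
            simp only [Set.mem_inter_iff, Set.mem_singleton_iff, Set.mem_empty_iff_false,
              iff_false, not_and]
            rintro rfl
            exact hxs
          have h0 : (∅ : Set I) ∈ (U m : Filter I) := hdisj ▸ Filter.inter_mem hsing hs
          exact Filter.empty_notMem _ h0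
        · intro hxs
          exact Filter.mem_of_superset hsing (Set.singleton_subset_iff.mpr hxs)
      · intro 𝒮 h𝒮 hmem
        have hmem' : ∀ X ∈ (fun t => e.symm ⁻¹' t) '' 𝒮, X ∈ (U m : Filter I) := by
          rintro X ⟨t, ht, rfl⟩
          have hm := hmem t ht
          rwa [Ultrafilter.coe_map, Filter.mem_map] at hm
        have hcard' : Cardinal.mk ((fun t => e.symm ⁻¹' t) '' 𝒮) < κ :=
          lt_of_le_of_lt Cardinal.mk_image_le h𝒮
        have hI := hcomp m _ hcard' hmem'
        rw [Set.sInter_image] at hI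
        show ⋂₀ 𝒮 ∈ (Ultrafilter.map e.symm (U m) : Filter _)
        rw [Ultrafilter.coe_map, Filter.mem_map, Set.preimage_sInter]
        exact hI
    choose x hx using hprin
    refine ⟨n, x, fun c => if hc : ∃ a : ∀ i, A i, ∀ m, a (x m) = c m
      then h hc.choose else 1, ?_⟩
    funext a
    have hex : ∃ b : ∀ i, A i, ∀ m, b (x m) = a (x m) := ⟨a, fun m => rfl⟩
    simp only [Function.comp_apply]
    rw [dif_pos hex]
    set b := hex.choose with hbdef
    have hbspec := hex.choose_spec
    have hXm : ∀ m, {i | b i = a i} ∈ (U m : Filter I) := by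
      intro m
      rw [hx m, Filter.mem_pure]
      exact hbspec m
    have hXK : {i | b i = a i} ∈ 𝒦 := hint _ hXm
    have hone : h (b * a⁻¹) = 1 := hXK _ (fun i hi => by
      have hba : b i = a i := hi
      simp [hba])
    rw [map_mul, map_inv, mul_inv_eq_one] at hone
    exact hone.symm
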